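/- For all x, ξ ∈ ℝ^d and t > 0 the kernel H solves the parabolic equation associated with the complex Ornstein–Uhlenbeck operator: the time derivative ∂H/∂t(x,ξ,t) exists and equals α·Σ_{i=1}^d ∂²H/∂x_i²(x,ξ,t) + Σ_{i=1}^d (Sx)_i · ∂H/∂x_i(x,ξ,t) − δ·H(x,ξ,t). -/

import Mathlib

open MeasureTheory

/-- Rotation `e^{tS}x` given by the matrix exponential. -/
noncomputable def ouRot (d : ℕ) (S : Matrix (Fin d) (Fin d) ℝ) (t : ℝ)
    (x : EuclideanSpace ℝ (Fin d)) : EuclideanSpace ℝ (Fin d) :=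
  WithLp.toLp 2 (Matrix.mulVec (NormedSpace.exp (t • S)) (fun j => x j))

/-- The scalar complex Ornstein--Uhlenbeck kernel
`H(x,ξ,t) = (4παt)^{-d/2} exp(-δt - |e^{tS}x - ξ|²/(4αt))`. -/
noncomputable def ouH (d : ℕ) (α δ : ℂ) (S : Matrix (Fin d) (Fin d) ℝ)
    (x ξ : EuclideanSpace ℝ (Fin d)) (t : ℝ) : ℂ :=
  (4 * (Real.pi : ℂ) * α * t) ^ (-(d : ℂ) / 2) *
    Complex.exp (-(δ * t) - ((‖ouRot d S t x - ξ‖ ^ 2 : ℝ) : ℂ) / (4 * α * t))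

namespace OUAux

private lemma normsq {d : ℕ} (v : EuclideanSpace ℝ (Fin d)) : ‖v‖^2 = ∑ j, (v j)^2 := by
  rw [EuclideanSpace.norm_eq, Real.sq_sqrt (by positivity)]
  exact Finset.sum_congr rfl fun j _ => by rw [Real.norm_eq_abs, sq_abs]

private lemma hasDerivAt_quadExp (C K M : ℂ) (a b c s : ℝ) :
    HasDerivAt (fun s : ℝ => C * Complex.exp (K - ((a + b*s + c*s^2 : ℝ) : ℂ) * M))
      (C * Complex.exp (K - ((a + b*s + c*s^2 : ℝ) : ℂ) * M) * (-(((b + 2*c*s : ℝ)) : ℂ) * M)) s := by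
  have h1 : HasDerivAt (fun s : ℝ => a + b*s + c*s^2) (b + 2*c*s) s := by
    have hb : HasDerivAt (fun s : ℝ => b * s) b s := by simpa using (hasDerivAt_id s).const_mul b
    have hc : HasDerivAt (fun s : ℝ => c * s^2) (c * (2*s)) s := by
      simpa using (hasDerivAt_pow 2 s).const_mul c
    have h := ((hasDerivAt_const s a).add hb).add hc
    refine h.congr_deriv ?_
    ring
  have h2 := ((h1.ofReal_comp.mul_const M).const_sub K).cexp.const_mul C
  refine h2.congr_deriv ?_
  ring

variable (d : ℕ) (S : Matrix (Fin d) (Fin d) ℝ) (t : ℝ) (x ξ : EuclideanSpace ℝ (Fin d)) (α δ : ℂ)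

noncomputable def A : Matrix (Fin d) (Fin d) ℝ := NormedSpace.exp (t • S)
noncomputable def w : Fin d → ℝ := fun j => (A d S t).mulVec (fun k => x k) j - ξ j
noncomputable def W : ℝ := ∑ j, (w d S t x ξ j)^2
noncomputable def P (i : Fin d) : ℝ := ∑ j, w d S t x ξ j * A d S t j i
noncomputable def D : ℝ := ∑ j, w d S t x ξ j * ((A d S t) * S).mulVec (fun k => x k) j
noncomputable def M : ℂ := (4*α*(t:ℂ))⁻¹
noncomputable def K : ℂ := -(δ*(t:ℂ))
noncomputable def CC : ℂ := (4*(Real.pi:ℂ)*α*(t:ℂ)) ^ (-(d:ℂ)/2)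
noncomputable def E : ℂ := Complex.exp (K t δ - (W d S t x ξ : ℂ) * M t α)

lemma orth (hS : S.transpose = -S) : (A d S t).transpose * A d S t = 1 := by
  have h1 : (A d S t).transpose = NormedSpace.exp (-(t • S)) := by
    rw [A, ← Matrix.exp_transpose]
    congr 1
    rw [Matrix.transpose_smul, hS, smul_neg]
  rw [h1, A, ← Matrix.exp_add_of_commute (-(t • S)) (t • S) (Commute.neg_left (Commute.refl _))]
  simp [NormedSpace.exp_zero]

lemma delta (hS : S.transpose = -S) (i k : Fin d) :
    ∑ j, A d S t j i * A d S t j k = if i = k then 1 else 0 := by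
  have h := congrFun (congrFun (orth d S t hS) i) k
  simpa [Matrix.mul_apply, Matrix.transpose_apply, Matrix.one_apply] using h

lemma Nsum (hS : S.transpose = -S) (i : Fin d) : ∑ j, (A d S t j i)^2 = 1 := by
  simpa [sq] using delta d S t hS i i

lemma delta' (hS : S.transpose = -S) (i k : Fin d) :
    ∑ j, A d S t i j * A d S t k j = if i = k then 1 else 0 := by
  have h := congrFun (congrFun (mul_eq_one_comm.mp (orth d S t hS) : A d S t * (A d S t).transpose = 1) i) k
  simpa [Matrix.mul_apply, Matrix.transpose_apply, Matrix.one_apply] using h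

lemma Psq (hS : S.transpose = -S) : ∑ i, (P d S t x ξ i)^2 = W d S t x ξ := by
  have expand : ∀ i, (P d S t x ξ i)^2
      = ∑ j, ∑ k, (w d S t x ξ j * w d S t x ξ k) * (A d S t j i * A d S t k i) := by
    intro i
    rw [P, sq, Finset.sum_mul_sum]
    exact Finset.sum_congr rfl fun j _ => Finset.sum_congr rfl fun k _ => by ring
  rw [Finset.sum_congr rfl fun i _ => expand i, Finset.sum_comm]
  have : ∀ j, ∑ i, ∑ k, (w d S t x ξ j * w d S t x ξ k) * (A d S t j i * A d S t k i)
      = (w d S t x ξ j)^2 := by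
    intro j
    rw [Finset.sum_comm]
    have h1 : ∀ k, ∑ i, (w d S t x ξ j * w d S t x ξ k) * (A d S t j i * A d S t k i)
        = (w d S t x ξ j * w d S t x ξ k) * (if j = k then 1 else 0) := by
      intro k
      rw [← Finset.mul_sum, delta' d S t hS j k]
    simp_rw [h1]
    simp [sq]
  rw [Finset.sum_congr rfl fun j _ => this j, W]

lemma drift : ∑ i, (S.mulVec (fun j => x j) i) * P d S t x ξ i = D d S t x ξ := by
  simp_rw [P, Finset.mul_sum]
  rw [Finset.sum_comm, D]
  refine Finset.sum_congr rfl fun j _ => ?_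
  rw [← Matrix.mulVec_mulVec]
  rw [show (A d S t).mulVec (S.mulVec fun k => x k) j
      = ∑ i, A d S t j i * S.mulVec (fun k => x k) i from rfl, Finset.mul_sum]
  exact Finset.sum_congr rfl fun i _ => by ring

lemma shift (hS : S.transpose = -S) (i : Fin d) (s : ℝ) :
    ‖ouRot d S t (x + s • EuclideanSpace.single i (1:ℝ)) - ξ‖^2
      = W d S t x ξ + (2 * P d S t x ξ i) * s + 1 * s^2 := by
  have hcomp : ∀ j, (ouRot d S t (x + s • EuclideanSpace.single i (1:ℝ)) - ξ) j
      = w d S t x ξ j + A d S t j i * s := by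
    intro j
    have h1 : (ouRot d S t (x + s • EuclideanSpace.single i (1:ℝ)) - ξ) j
        = (∑ k, A d S t j k * ((x k) + (if k = i then s else 0))) - ξ j := by
      simp [ouRot, Matrix.mulVec, dotProduct, A, EuclideanSpace.single_apply,
        PiLp.add_apply, PiLp.smul_apply, smul_eq_mul]
    rw [h1]
    have h2 : ∀ k, A d S t j k * ((x k) + (if k = i then s else 0))
        = A d S t j k * x k + (if k = i then A d S t j k * s else 0) := by
      intro k; by_cases h : k = i <;> simp [h] <;> ring
    rw [Finset.sum_congr rfl fun k _ => h2 k, Finset.sum_add_distrib, Finset.sum_ite_eq' Finset.univ i]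
    simp only [Finset.mem_univ, if_true, w, Matrix.mulVec, dotProduct]
    ring
  rw [normsq, Finset.sum_congr rfl fun j _ => by rw [hcomp j]]
  have expand : ∀ j, (w d S t x ξ j + A d S t j i * s)^2
      = (w d S t x ξ j)^2 + (2*s) * (w d S t x ξ j * A d S t j i) + s^2 * (A d S t j i)^2 :=
    fun j => by ring
  rw [Finset.sum_congr rfl fun j _ => expand j]
  rw [Finset.sum_add_distrib, Finset.sum_add_distrib, ← Finset.mul_sum, ← Finset.mul_sum,
    Nsum d S t hS i]
  rw [show ∑ j, (w d S t x ξ j)^2 = W d S t x ξ from rfl,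
    show ∑ j, w d S t x ξ j * A d S t j i = P d S t x ξ i from rfl]
  ring

lemma ouH_shift (hS : S.transpose = -S) (i : Fin d) (s : ℝ) :
    ouH d α δ S (x + s • EuclideanSpace.single i (1:ℝ)) ξ t
      = CC d t α * Complex.exp (K t δ
          - ((W d S t x ξ + (2 * P d S t x ξ i) * s + 1 * s^2 : ℝ) : ℂ) * M t α) := by
  rw [ouH, shift d S t x ξ hS i s, div_eq_mul_inv]
  rfl

lemma ouH_self : ouH d α δ S x ξ t = CC d t α * E d S t x ξ α δ := by
  rw [ouH, div_eq_mul_inv]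
  rw [show ‖ouRot d S t x - ξ‖^2 = W d S t x ξ by
    rw [normsq]; exact Finset.sum_congr rfl fun j _ => rfl]
  rfl

lemma deriv_first (hS : S.transpose = -S) (i : Fin d) :
    deriv (fun s : ℝ => ouH d α δ S (x + s • EuclideanSpace.single i (1:ℝ)) ξ t) 0
      = CC d t α * E d S t x ξ α δ * (-(2*(P d S t x ξ i : ℂ)) * M t α) := by
  have hfun : (fun s : ℝ => ouH d α δ S (x + s • EuclideanSpace.single i (1:ℝ)) ξ t)
      = fun s => CC d t α * Complex.exp (K t δ
          - ((W d S t x ξ + (2 * P d S t x ξ i) * s + 1 * s^2 : ℝ) : ℂ) * M t α) :=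
    funext fun s => ouH_shift d S t x ξ α δ hS i s
  rw [hfun, (hasDerivAt_quadExp (CC d t α) (K t δ) (M t α) (W d S t x ξ)
    (2 * P d S t x ξ i) 1 0).deriv]
  rw [E]
  push_cast
  norm_num

lemma deriv_second (hS : S.transpose = -S) (i : Fin d) :
    deriv (fun s : ℝ => deriv (fun r : ℝ =>
        ouH d α δ S ((x + s • EuclideanSpace.single i (1:ℝ))
          + r • EuclideanSpace.single i (1:ℝ)) ξ t) 0) 0
      = CC d t α * E d S t x ξ α δ
          * ((2*(P d S t x ξ i : ℂ))^2 * (M t α)^2 - 2 * M t α) := by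
  have hinner : ∀ s : ℝ, deriv (fun r : ℝ =>
        ouH d α δ S ((x + s • EuclideanSpace.single i (1:ℝ))
          + r • EuclideanSpace.single i (1:ℝ)) ξ t) 0
      = (CC d t α * Complex.exp (K t δ
          - ((W d S t x ξ + (2 * P d S t x ξ i) * s + 1 * s^2 : ℝ) : ℂ) * M t α))
        * (-((2 * P d S t x ξ i + 2 * s : ℝ) : ℂ) * M t α) := by
    intro s
    have hfun : (fun r : ℝ => ouH d α δ S ((x + s • EuclideanSpace.single i (1:ℝ))
          + r • EuclideanSpace.single i (1:ℝ)) ξ t)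
        = fun r => CC d t α * Complex.exp (K t δ
          - (((W d S t x ξ + (2 * P d S t x ξ i) * s + 1 * s^2)
              + (2 * P d S t x ξ i + 2 * s) * r + 1 * r^2 : ℝ) : ℂ) * M t α) := by
      funext r
      rw [show (x + s • EuclideanSpace.single i (1:ℝ)) + r • EuclideanSpace.single i (1:ℝ)
          = x + (s + r) • EuclideanSpace.single i (1:ℝ) by rw [add_assoc, ← add_smul],
        ouH_shift d S t x ξ α δ hS i (s + r)]
      rw [show (W d S t x ξ + (2 * P d S t x ξ i) * (s + r) + 1 * (s + r)^2 : ℝ)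
          = (W d S t x ξ + (2 * P d S t x ξ i) * s + 1 * s^2)
              + (2 * P d S t x ξ i + 2 * s) * r + 1 * r^2 by ring]
    rw [hfun, (hasDerivAt_quadExp (CC d t α) (K t δ) (M t α)
      (W d S t x ξ + (2 * P d S t x ξ i) * s + 1 * s^2)
      (2 * P d S t x ξ i + 2 * s) 1 0).deriv]
    norm_num
  rw [funext hinner]
  have h1 := hasDerivAt_quadExp (CC d t α) (K t δ) (M t α) (W d S t x ξ)
    (2 * P d S t x ξ i) 1 0
  have hlin : HasDerivAt (fun s : ℝ => -((2 * P d S t x ξ i + 2 * s : ℝ) : ℂ) * M t α)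
      (-(2:ℂ) * M t α) 0 := by
    have h0 : HasDerivAt (fun s : ℝ => 2 * P d S t x ξ i + 2 * s) 2 0 := by
      simpa using ((hasDerivAt_id (0:ℝ)).const_mul 2).const_add (2 * P d S t x ξ i)
    have h3 := (h0.ofReal_comp.neg).mul_const (M t α)
    refine h3.congr_deriv ?_
    norm_num
  rw [(show HasDerivAt (fun s : ℝ => CC d t α * Complex.exp (K t δ - ((W d S t x ξ + (2 * P d S t x ξ i) * s + 1 * s^2 : ℝ) : ℂ) * M t α) * (-((2 * P d S t x ξ i + 2 * s : ℝ) : ℂ) * M t α)) _ 0 from h1.mul hlin).deriv, E]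
  push_cast
  norm_num
  ring

lemma timeDeriv (hα : 0 < α.re) (ht : 0 < t) :
    HasDerivAt (fun τ : ℝ => ouH d α δ S x ξ τ)
      ((-(d:ℂ)/2) * (4*(Real.pi:ℂ)*α*(t:ℂ)) ^ (-(d:ℂ)/2 - 1) * (4*(Real.pi:ℂ)*α)
          * E d S t x ξ α δ
        + CC d t α * (E d S t x ξ α δ *
            (-δ - (2*(D d S t x ξ : ℂ) * M t α
              + (W d S t x ξ : ℂ) * (-(4*α) / (4*α*(t:ℂ))^2))))) t := by
  letI : SeminormedRing (Matrix (Fin d) (Fin d) ℝ) := Matrix.linftyOpSemiNormedRing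
  letI : NormedRing (Matrix (Fin d) (Fin d) ℝ) := Matrix.linftyOpNormedRing
  letI : NormedAlgebra ℝ (Matrix (Fin d) (Fin d) ℝ) := Matrix.linftyOpNormedAlgebra
  have ht0 : (t:ℂ) ≠ 0 := by exact_mod_cast ht.ne'
  have hα0 : α ≠ 0 := fun h => by simp [h] at hα
  have h4αt : (4*α*(t:ℂ)) ≠ 0 := by
    intro h
    rcases mul_eq_zero.mp h with h' | h'
    · rcases mul_eq_zero.mp h' with h'' | h''
      · norm_num at h''
      · exact hα0 h''
    · exact ht0 h'
  have hfun : (fun τ : ℝ => ouH d α δ S x ξ τ)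
      = fun τ : ℝ => (4*(Real.pi:ℂ)*α*(τ:ℂ)) ^ (-(d:ℂ)/2) *
          Complex.exp (-(δ*(τ:ℂ))
            - ((∑ j, ((NormedSpace.exp (τ • S)).mulVec (fun k => x k) j - ξ j)^2 : ℝ) : ℂ)
              * (4*α*(τ:ℂ))⁻¹) := by
    funext τ
    rw [ouH]
    congr 1
    rw [show ‖ouRot d S τ x - ξ‖^2
        = (∑ j, ((NormedSpace.exp (τ • S)).mulVec (fun k => x k) j - ξ j)^2 : ℝ) by
      rw [normsq]; exact Finset.sum_congr rfl fun j _ => rfl, div_eq_mul_inv]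
  have hbase : HasDerivAt (fun z : ℂ => 4*(Real.pi:ℂ)*α*z) (4*(Real.pi:ℂ)*α) ((t:ℝ):ℂ) := by
    simpa using (hasDerivAt_id ((t:ℝ):ℂ)).const_mul (4*(Real.pi:ℂ)*α)
  have hre : 0 < (4*(Real.pi:ℂ)*α*(t:ℂ)).re := by
    rw [show (4*(Real.pi:ℂ)*α*(t:ℂ)) = ((4*Real.pi*t : ℝ) : ℂ) * α by push_cast; ring,
      Complex.re_ofReal_mul]
    have := Real.pi_pos
    positivity
  have hcpow : HasDerivAt (fun τ : ℝ => (4*(Real.pi:ℂ)*α*(τ:ℂ)) ^ (-(d:ℂ)/2))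
      ((-(d:ℂ)/2) * (4*(Real.pi:ℂ)*α*(t:ℂ)) ^ (-(d:ℂ)/2 - 1) * (4*(Real.pi:ℂ)*α)) t := by
    have hz : HasDerivAt (fun z : ℂ => (4*(Real.pi:ℂ)*α*z) ^ (-(d:ℂ)/2))
        ((-(d:ℂ)/2) * (4*(Real.pi:ℂ)*α*(t:ℂ)) ^ (-(d:ℂ)/2 - 1) * (4*(Real.pi:ℂ)*α)) ((t:ℝ):ℂ) :=
      hbase.cpow_const (Complex.mem_slitPlane_iff.mpr (Or.inl hre))
    exact hz.comp_ofReal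
  have hvj : ∀ j : Fin d, HasDerivAt
      (fun τ : ℝ => (NormedSpace.exp (τ • S)).mulVec (fun k => x k) j - ξ j)
      (((A d S t) * S).mulVec (fun k => x k) j) t := by
    intro j
    have hm : HasDerivAt (fun τ : ℝ => NormedSpace.exp (τ • S))
        ((NormedSpace.exp (t • S)) * S) t := hasDerivAt_exp_smul_const S t
    let L : Matrix (Fin d) (Fin d) ℝ →ₗ[ℝ] ℝ :=
      { toFun := fun m => m.mulVec (fun k => x k) j
        map_add' := fun m n => by simp [Matrix.add_mulVec]
        map_smul' := fun c m => by simp [Matrix.smul_mulVec] }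
    exact ((L.toContinuousLinearMap.hasFDerivAt).comp_hasDerivAt t hm).sub_const (ξ j)
  have hQ : HasDerivAt
      (fun τ : ℝ => ∑ j, ((NormedSpace.exp (τ • S)).mulVec (fun k => x k) j - ξ j)^2)
      (∑ j, 2 * (w d S t x ξ j)^1 * (((A d S t) * S).mulVec (fun k => x k) j)) t := by
    refine HasDerivAt.fun_sum fun j _ => ?_
    exact (hvj j).pow 2
  have hMf : HasDerivAt (fun τ : ℝ => (4*α*(τ:ℂ))⁻¹) (-(4*α) / (4*α*(t:ℂ))^2) t := by
    have hz2 : HasDerivAt (fun z : ℂ => (4*α*z)⁻¹) (-(4*α) / (4*α*(t:ℂ))^2) ((t:ℝ):ℂ) := by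
      have := ((hasDerivAt_id ((t:ℝ):ℂ)).const_mul (4*α)).inv h4αt
      exact this.congr_deriv (by simp)
    exact hz2.comp_ofReal
  have hδt : HasDerivAt (fun τ : ℝ => δ*(τ:ℂ)) δ t := by
    simpa using (Complex.ofRealCLM.hasDerivAt (x := t)).const_mul δ
  have he := (hδt.neg).sub ((hQ.ofReal_comp).mul hMf)
  have htot := hcpow.mul he.cexp
  rw [hfun]
  refine htot.congr_deriv ?_
  simp only [Pi.sub_apply, Pi.mul_apply, Pi.neg_apply]
  have hsum : (∑ j, 2 * (w d S t x ξ j)^1 * (((A d S t) * S).mulVec (fun k => x k) j))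
      = 2 * D d S t x ξ := by
    rw [D, Finset.mul_sum]
    exact Finset.sum_congr rfl fun j _ => by ring
  rw [hsum, show (∑ j, ((NormedSpace.exp (t • S)).mulVec (fun k => x k) j - ξ j)^2 : ℝ)
      = W d S t x ξ from rfl, E, K, M, CC]
  push_cast
  ring

end OUAux

/-- the kernel `H` solves `∂H/∂t = α ΔH + ⟨Sx, ∇H⟩ - δ H`. -/
theorem ouKernel_solves_heat_equation
    (d : ℕ) (hd : 1 ≤ d) (α δ : ℂ) (hα : 0 < α.re)
    (S : Matrix (Fin d) (Fin d) ℝ) (hS : S.transpose = -S)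
    (x ξ : EuclideanSpace ℝ (Fin d)) (t : ℝ) (ht : 0 < t) :
    HasDerivAt (fun τ : ℝ => ouH d α δ S x ξ τ)
      (α * ∑ i : Fin d,
          deriv (fun s : ℝ =>
            deriv (fun r : ℝ =>
              ouH d α δ S
                ((x + s • EuclideanSpace.single i (1 : ℝ))
                  + r • EuclideanSpace.single i (1 : ℝ)) ξ t) 0) 0
        + ∑ i : Fin d, ((S.mulVec (fun j => x j) i : ℝ) : ℂ) *
            deriv (fun s : ℝ =>
              ouH d α δ S (x + s • EuclideanSpace.single i (1 : ℝ)) ξ t) 0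
        - δ * ouH d α δ S x ξ t) t := by
  have hα0 : α ≠ 0 := fun h => by simp [h] at hα
  have htC : (t:ℂ) ≠ 0 := by exact_mod_cast ht.ne'
  have hπ0 : ((Real.pi:ℝ):ℂ) ≠ 0 := by exact_mod_cast Real.pi_ne_zero
  have h4 : (4:ℂ) ≠ 0 := by norm_num
  have hz0 : (4*(Real.pi:ℂ)*α*(t:ℂ)) ≠ 0 :=
    mul_ne_zero (mul_ne_zero (mul_ne_zero h4 hπ0) hα0) htC
  have h4αt : (4*α*(t:ℂ)) ≠ 0 := mul_ne_zero (mul_ne_zero h4 hα0) htC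
  have hCC : OUAux.CC d t α
      = (4*(Real.pi:ℂ)*α*(t:ℂ)) ^ (-(d:ℂ)/2 - 1) * (4*(Real.pi:ℂ)*α*(t:ℂ)) := by
    have h := Complex.cpow_add (-(d:ℂ)/2 - 1) 1 hz0 (x := 4*(Real.pi:ℂ)*α*(t:ℂ))
    rw [Complex.cpow_one] at h
    rw [OUAux.CC, ← h]
    congr 1
    ring
  have hPsqC : (∑ i, ((OUAux.P d S t x ξ i : ℝ):ℂ)^2) = ((OUAux.W d S t x ξ : ℝ):ℂ) := by
    rw [← OUAux.Psq d S t x ξ hS]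
    push_cast
    rfl
  have hDC : (∑ i, ((S.mulVec (fun j => x j) i : ℝ):ℂ) * ((OUAux.P d S t x ξ i : ℝ):ℂ))
      = ((OUAux.D d S t x ξ : ℝ):ℂ) := by
    rw [← OUAux.drift d S t x ξ]
    push_cast
    rfl
  have hT := OUAux.timeDeriv d S t x ξ α δ hα ht
  convert hT using 1
  have hdrift : (∑ i : Fin d, ((S.mulVec (fun j => x j) i : ℝ) : ℂ) *
        deriv (fun s : ℝ => ouH d α δ S (x + s • EuclideanSpace.single i (1 : ℝ)) ξ t) 0)
      = ∑ i : Fin d, ((S.mulVec (fun j => x j) i : ℝ) : ℂ) *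
          (OUAux.CC d t α * OUAux.E d S t x ξ α δ
            * (-(2*(OUAux.P d S t x ξ i : ℂ)) * OUAux.M t α)) :=
    Finset.sum_congr rfl fun i _ => by rw [OUAux.deriv_first d S t x ξ α δ hS i]
  rw [Finset.sum_congr rfl (fun i _ => OUAux.deriv_second d S t x ξ α δ hS i), hdrift,
    OUAux.ouH_self d S t x ξ α δ]
  have h2 : ∑ i : Fin d, OUAux.CC d t α * OUAux.E d S t x ξ α δ
        * ((2*(OUAux.P d S t x ξ i : ℂ))^2 * (OUAux.M t α)^2 - 2 * OUAux.M t α)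
      = OUAux.CC d t α * OUAux.E d S t x ξ α δ
        * ((4*((OUAux.W d S t x ξ : ℝ):ℂ)) * (OUAux.M t α)^2 - 2*(d:ℂ) * OUAux.M t α) := by
    rw [Finset.sum_congr rfl (fun i _ => show OUAux.CC d t α * OUAux.E d S t x ξ α δ
        * ((2*(OUAux.P d S t x ξ i : ℂ))^2 * (OUAux.M t α)^2 - 2 * OUAux.M t α)
      = (OUAux.CC d t α * OUAux.E d S t x ξ α δ * (4 * (OUAux.M t α)^2))
          * ((OUAux.P d S t x ξ i : ℂ))^2
        - OUAux.CC d t α * OUAux.E d S t x ξ α δ * (2 * OUAux.M t α) from by ring),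
      Finset.sum_sub_distrib, ← Finset.mul_sum, hPsqC, Finset.sum_const, Finset.card_univ,
      Fintype.card_fin, nsmul_eq_mul]
    ring
  have h3 : ∑ i : Fin d, ((S.mulVec (fun j => x j) i : ℝ):ℂ)
        * (OUAux.CC d t α * OUAux.E d S t x ξ α δ
            * (-(2*(OUAux.P d S t x ξ i : ℂ)) * OUAux.M t α))
      = OUAux.CC d t α * OUAux.E d S t x ξ α δ * (-2 * OUAux.M t α)
          * ((OUAux.D d S t x ξ : ℝ):ℂ) := by
    rw [Finset.sum_congr rfl (fun i _ => show ((S.mulVec (fun j => x j) i : ℝ):ℂ)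
        * (OUAux.CC d t α * OUAux.E d S t x ξ α δ
            * (-(2*(OUAux.P d S t x ξ i : ℂ)) * OUAux.M t α))
      = (OUAux.CC d t α * OUAux.E d S t x ξ α δ * (-2 * OUAux.M t α))
          * (((S.mulVec (fun j => x j) i : ℝ):ℂ) * ((OUAux.P d S t x ξ i : ℝ):ℂ))
        from by ring), ← Finset.mul_sum, hDC]
  rw [h2, h3, hCC, OUAux.M]
  field_simp
  ring
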